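/- Let x, y be surreal numbers such that the maximal ordinal α with α ⊑ y is a limit ordinal (and y > 0). Then ω^{x ∔ y} = ω^x ∔ ω^{τ_x ∔ y}, where τ_x is the ordinal of +1 signs in x. -/

import Mathlib

open Ordinal

attribute [local instance] Classical.propDecidable

/-- A surreal number presented as a sign sequence: a map from an ordinal (its
length) to `{-1, +1}`, extended by `0` beyond its length. -/
structure SSurreal : Type 1 where
  length : Ordinal.{0}
  sign : Ordinal → ℤ
  sign_mem : ∀ α, α < length → sign α = 1 ∨ sign α = -1
  sign_zero : ∀ α, ¬ α < length → sign α = 0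

namespace SSurreal

/-- Simplicity: `x ⊑ y`, i.e. `x` is an initial segment of `y`. -/
def sle (x y : SSurreal) : Prop := ∀ α, α < x.length → x.sign α = y.sign α

/-- Strict simplicity `x ⊏ y`. -/
def slt (x y : SSurreal) : Prop := sle x y ∧ x ≠ y

/-- The (lexicographic, Conway) order on sign sequences. -/
def lt (x y : SSurreal) : Prop :=
  ∃ α, (∀ β, β < α → x.sign β = y.sign β) ∧ x.sign α < y.sign α

/-- The empty sign sequence, i.e. the surreal number `0`. -/
noncomputable def zero : SSurreal :=
  ⟨0, fun _ => 0, fun α h => absurd h (not_lt_of_ge (zero_le (a := α))), fun _ _ => rfl⟩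

/-- The ordinal `o` viewed as the constant `+1` sign sequence of length `o`. -/
noncomputable def ofOrdinal (o : Ordinal) : SSurreal :=
  ⟨o, fun α => if α < o then 1 else 0, fun α h => Or.inl (if_pos h), fun α h => if_neg h⟩

/-- The surreal number `1`. -/
noncomputable def one : SSurreal := ofOrdinal 1

/-- The surreal number `-1`. -/
noncomputable def negOne : SSurreal :=
  ⟨1, fun α => if α < 1 then -1 else 0, fun α h => Or.inr (if_pos h), fun α h => if_neg h⟩

/-- Negation: flip every sign. -/
noncomputable def neg (x : SSurreal) : SSurreal :=
  ⟨x.length, fun α => - x.sign α,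
    fun α h => by rcases x.sign_mem α h with h' | h' <;> simp [h'],
    fun α h => by simp [x.sign_zero α h]⟩

/-- Concatenation `x ∔ y` of sign sequences. -/
noncomputable def concat (x y : SSurreal) : SSurreal where
  length := x.length + y.length
  sign α := if α < x.length then x.sign α else y.sign (α - x.length)
  sign_mem := by
    intro α h
    try dsimp only
    by_cases hx : α < x.length
    · rw [if_pos hx]; exact x.sign_mem α hx
    · rw [if_neg hx]
      refine y.sign_mem _ ?_
      have hle : x.length ≤ α := le_of_not_gt hx
      have := Ordinal.sub_lt_of_le hle (c := y.length)
      exact this.mpr h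
  sign_zero := by
    intro α h
    try dsimp only
    have hx : ¬ α < x.length := fun hx =>
      h (hx.trans_le (le_add_right (le_refl _)))
    rw [if_neg hx]
    refine y.sign_zero _ ?_
    intro hy
    exact h ((Ordinal.sub_lt_of_le (le_of_not_gt hx)).mp hy)

/-- The concatenation product `x ⨰ y` of sign sequences. -/
noncomputable def mul (x y : SSurreal) : SSurreal where
  length := x.length * y.length
  sign γ := if γ < x.length * y.length then y.sign (γ / x.length) * x.sign (γ % x.length) else 0
  sign_mem := by
    intro γ h
    try dsimp only
    rw [if_pos h]
    have hx0 : x.length ≠ 0 := by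
      intro h0; rw [h0, zero_mul] at h; exact (not_lt_of_ge (zero_le (a := γ))) h
    have h1 : γ / x.length < y.length := by
      rwa [Ordinal.div_lt hx0]
    have h2 : γ % x.length < x.length := Ordinal.mod_lt γ hx0
    rcases y.sign_mem _ h1 with hy | hy <;> rcases x.sign_mem _ h2 with hx | hx <;>
      simp [hy, hx]
  sign_zero := fun γ h => if_neg h

/-- `s` is the supremum of `C` with respect to simplicity. -/
def IsSimpSup (C : Set SSurreal) (s : SSurreal) : Prop :=
  (∀ x ∈ C, sle x s) ∧ ∀ t, (∀ x ∈ C, sle x t) → sle s t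

/-- The supremum of a ⊏-chain of sign sequences (their union), when it
exists; junk value `zero` otherwise. -/
noncomputable def chainSup (C : Set SSurreal) : SSurreal :=
  if h : ∃ s, IsSimpSup C s then h.choose else zero

/-- Transfinite concatenation `[α, f] = ∔_{γ<α} f(γ)`. -/
noncomputable def concatSum (α : Ordinal) (f : Ordinal → SSurreal) : SSurreal :=
  Ordinal.limitRecOn α zero (fun β ih => concat ih (f β))
    (fun γ _ ih => chainSup (Set.range fun p : Set.Iio γ => ih p.1 p.2))

/-- Restriction of `z` to an initial segment of length (at most) `β`. -/
noncomputable def trunc (z : SSurreal) (β : Ordinal) : SSurreal where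
  length := min β z.length
  sign α := if α < min β z.length then z.sign α else 0
  sign_mem := fun α h => by
    try dsimp only
    rw [if_pos h]; exact z.sign_mem α (h.trans_le (min_le_right _ _))
  sign_zero := fun α h => if_neg h

/-- The number of `+1` signs occurring in `s` strictly below `γ`. -/
noncomputable def countPlus (s : Ordinal → ℤ) (γ : Ordinal) : Ordinal :=
  Ordinal.limitRecOn γ 0 (fun β ih => if s β = 1 then ih + 1 else ih)
    (fun γ' _ ih => ⨆ β : Set.Iio γ', ih β.1 β.2)

/-- `τ_u`: the ordinal number of `+1` signs in the sign sequence of `u`. -/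
noncomputable def tau (u : SSurreal) : Ordinal := countPlus u.sign u.length

end SSurreal

namespace SSurreal

/-- `σ · x`: `x` if the sign `σ` is `+1`, `−x` otherwise. -/
noncomputable def signScale (σ : ℤ) (x : SSurreal) : SSurreal :=
  if σ = 1 then x else neg x

/-- The right-hand side of Gonshor's sign sequence formula for the ω-map:
`1 ∔ ∔_{β<ℓ(z)} ( z[β] · ω^{τ_{z↾(β+1)} + 1} )`. -/
noncomputable def gonshorRHS (z : SSurreal) : SSurreal :=
  concat one
    (concatSum z.length fun β =>
      signScale (z.sign β)
        (ofOrdinal (Ordinal.omega0 ^ (tau (trunc z (β + 1)) + 1))))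

/-- `x` and `y` lie in the same archimedean class (with respect to Conway
multiplication `Cmul`): each is bounded by a positive integer multiple of the
other. -/
noncomputable def archEquiv (Cmul : SSurreal → SSurreal → SSurreal)
    (x y : SSurreal) : Prop :=
  ∃ n : ℕ, 0 < n ∧ lt y (Cmul (ofOrdinal n) x) ∧ lt x (Cmul (ofOrdinal n) y)

end SSurreal

namespace SSurreal

theorem ext' {x y : SSurreal} (hl : x.length = y.length)
    (hs : ∀ α, α < x.length → x.sign α = y.sign α) : x = y := by
  cases x with | mk lx sx mx zx => cases y with | mk ly sy my zy =>
  dsimp at hl hs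
  subst hl
  have : sx = sy := by
    funext α
    by_cases h : α < lx
    · exact hs α h
    · rw [zx α h, zy α h]
  subst this
  rfl

theorem sle_refl (x : SSurreal) : sle x x := fun _ _ => rfl

theorem sle_trans {x y z : SSurreal} (h1 : sle x y) (h2 : sle y z)
    (hxy : x.length ≤ y.length) : sle x z :=
  fun α hα => (h1 α hα).trans (h2 α (hα.trans_le hxy))

theorem sle_length_le {x y : SSurreal} (h : sle x y) : x.length ≤ y.length := by
  by_contra hc
  push_neg at hc
  have h1 := h y.length hc
  have h2 := y.sign_zero y.length (lt_irrefl _)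
  rcases x.sign_mem y.length hc with h3 | h3 <;> rw [h3, h2] at h1 <;> omega

theorem sle_trans' {x y z : SSurreal} (h1 : sle x y) (h2 : sle y z) : sle x z :=
  sle_trans h1 h2 (sle_length_le h1)

theorem sle_antisymm {x y : SSurreal} (h1 : sle x y) (h2 : sle y x) : x = y :=
  ext' (le_antisymm (sle_length_le h1) (sle_length_le h2)) h1

@[simp] theorem zero_length : zero.length = 0 := rfl
@[simp] theorem zero_sign (α : Ordinal) : zero.sign α = 0 := rfl
@[simp] theorem ofOrdinal_length (o : Ordinal) : (ofOrdinal o).length = o := rfl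
theorem ofOrdinal_sign (o α : Ordinal) : (ofOrdinal o).sign α = if α < o then 1 else 0 := rfl
@[simp] theorem concat_length (x y : SSurreal) :
    (concat x y).length = x.length + y.length := rfl
theorem concat_sign (x y : SSurreal) (α : Ordinal) :
    (concat x y).sign α = if α < x.length then x.sign α else y.sign (α - x.length) := rfl

theorem concat_sign_left {x : SSurreal} (y : SSurreal) {α : Ordinal} (h : α < x.length) :
    (concat x y).sign α = x.sign α := if_pos h

theorem concat_sign_right (x y : SSurreal) (α : Ordinal) :
    (concat x y).sign (x.length + α) = y.sign α := by
  rw [concat_sign, if_neg (by simp), Ordinal.add_sub_cancel]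

theorem concat_sign_right' {x : SSurreal} (y : SSurreal) {α : Ordinal} (h : x.length ≤ α) :
    (concat x y).sign α = y.sign (α - x.length) := by
  rw [concat_sign, if_neg (not_lt.2 h)]

theorem concat_zero (x : SSurreal) : concat x zero = x := by
  refine ext' (by simp) ?_
  intro α hα
  simp only [concat_length, zero_length, add_zero] at hα
  exact concat_sign_left _ hα

theorem concat_assoc (x y z : SSurreal) :
    concat (concat x y) z = concat x (concat y z) := by
  refine ext' (by simp [add_assoc]) ?_
  intro α hα
  by_cases h1 : α < x.length
  · rw [concat_sign_left _ (by simp only [concat_length]; exact h1.trans_le le_self_add),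
      concat_sign_left _ h1, concat_sign_left _ h1]
  · push_neg at h1
    by_cases h2 : α < x.length + y.length
    · have h3 : α - x.length < y.length := by
        rwa [Ordinal.sub_lt_of_le h1]
      rw [concat_sign_left _ (by simpa only [concat_length] using h2),
        concat_sign_right' _ h1, concat_sign_right' _ h1,
        concat_sign_left _ h3]
    · push_neg at h2
      have h3 : y.length ≤ α - x.length := by
        rwa [Ordinal.le_sub_of_le h1]  -- may not exist
      rw [concat_sign_right' _ (by simpa only [concat_length] using h2),
        concat_sign_right' _ h1, concat_sign_right' _ h3,
        Ordinal.sub_sub]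
      rfl

end SSurreal
namespace SSurreal

theorem ofOrdinal_concat (a b : Ordinal) :
    concat (ofOrdinal a) (ofOrdinal b) = ofOrdinal (a + b) := by
  refine ext' (by simp) ?_
  intro α hα
  simp only [concat_length, ofOrdinal_length] at hα
  rw [concat_sign]
  simp only [ofOrdinal_length, ofOrdinal_sign]
  by_cases h1 : α < a
  · simp [h1, h1.trans_le le_self_add]
  · push_neg at h1
    simp [not_lt.2 h1, Ordinal.sub_lt_of_le h1, hα]

theorem sle_ofOrdinal_ofOrdinal {a b : Ordinal} (h : a ≤ b) :
    sle (ofOrdinal a) (ofOrdinal b) := by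
  intro α hα
  simp only [ofOrdinal_length] at hα
  rw [ofOrdinal_sign, ofOrdinal_sign, if_pos hα, if_pos (hα.trans_le h)]

theorem sle_concat_self (x y : SSurreal) : sle x (concat x y) :=
  fun _ hα => (concat_sign_left y hα).symm

theorem concat_sle_concat {x y z : SSurreal} (h : sle y z) :
    sle (concat x y) (concat x z) := by
  intro α hα
  simp only [concat_length] at hα
  by_cases h1 : α < x.length
  · rw [concat_sign_left _ h1, concat_sign_left _ h1]
  · push_neg at h1
    rw [concat_sign_right' _ h1, concat_sign_right' _ h1]
    exact h _ (by rwa [Ordinal.sub_lt_of_le h1])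

theorem sle_drop {t u : SSurreal} {a : Ordinal} (x : SSurreal) (hx : x.length = a)
    (h : sle (concat x u) t) (α : Ordinal) (hα : α < u.length) :
    u.sign α = t.sign (a + α) := by
  subst hx
  rw [← concat_sign_right x u α]
  exact h _ (by simpa using (add_lt_add_right hα x.length))

/-- Existence of simp-suprema for chains. -/
theorem exists_isSimpSup (C : Set SSurreal) [Small.{0} C]
    (hchain : ∀ x ∈ C, ∀ y ∈ C, sle x y ∨ sle y x) : ∃ s, IsSimpSup C s := by
  classical
  set L : Set Ordinal := length '' C with hL
  have : Small.{0} L := small_image _ _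
  have hbdd : BddAbove L := Ordinal.bddAbove_of_small (s := L)
  set ℓ : Ordinal := sSup L with hℓ
  have hmem : ∀ {β}, β < ℓ → ∃ x ∈ C, β < x.length := by
    intro β hβ
    by_contra hc
    push_neg at hc
    have : ℓ ≤ β := csSup_le' (by rintro _ ⟨x, hx, rfl⟩; exact hc x hx)
    exact absurd hβ (not_lt.2 this)
  have key : ∀ {β} {x y : SSurreal}, x ∈ C → y ∈ C → β < x.length → β < y.length →
      x.sign β = y.sign β := by
    intro β x y hx hy hbx hby
    rcases hchain x hx y hy with h | h
    · exact h β hbx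
    · exact (h β hby).symm
  refine ⟨⟨ℓ, fun β => if h : β < ℓ then ((hmem h).choose).sign β else 0, ?_, ?_⟩, ?_, ?_⟩
  · intro β hβ
    rw [dif_pos hβ]
    exact ((hmem hβ).choose).sign_mem β (hmem hβ).choose_spec.2
  · intro β hβ
    exact dif_neg hβ
  · intro x hx β hβ
    have hβℓ : β < ℓ := hβ.trans_le (le_csSup hbdd ⟨x, hx, rfl⟩)
    dsimp only
    rw [dif_pos hβℓ]
    exact key hx (hmem hβℓ).choose_spec.1 hβ (hmem hβℓ).choose_spec.2
  · intro t ht β hβ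
    dsimp only at hβ ⊢
    rw [dif_pos hβ]
    exact (ht _ (hmem hβ).choose_spec.1) β (hmem hβ).choose_spec.2

theorem isSimpSup_unique {C : Set SSurreal} {s s' : SSurreal}
    (h : IsSimpSup C s) (h' : IsSimpSup C s') : s = s' :=
  sle_antisymm (h.2 s' h'.1) (h'.2 s h.1)

theorem chainSup_eq {C : Set SSurreal} {s : SSurreal} (h : IsSimpSup C s) :
    chainSup C = s := by
  rw [chainSup, dif_pos ⟨s, h⟩]
  exact isSimpSup_unique (Exists.choose_spec (⟨s, h⟩ : ∃ s, IsSimpSup C s)) h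

@[simp] theorem concatSum_zero (f : Ordinal → SSurreal) : concatSum 0 f = zero :=
  Ordinal.limitRecOn_zero _ _ _

theorem concatSum_succ (α : Ordinal) (f : Ordinal → SSurreal) :
    concatSum (α + 1) f = concat (concatSum α f) (f α) := by
  rw [concatSum, Ordinal.limitRecOn_add_one]
  rfl

theorem concatSum_limit {α : Ordinal} (h : Order.IsSuccLimit α) (f : Ordinal → SSurreal) :
    concatSum α f = chainSup (Set.range fun p : Set.Iio α => concatSum p.1 f) := by
  rw [concatSum, Ordinal.limitRecOn_limit _ _ _ _ h]
  rfl

end SSurreal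
namespace SSurreal

theorem isSimpSup_chainSup {C : Set SSurreal} (h : ∃ s, IsSimpSup C s) :
    IsSimpSup C (chainSup C) := by
  rw [chainSup, dif_pos h]
  exact h.choose_spec

/-- The tail of `t` after position `a`. -/
noncomputable def drop (t : SSurreal) (a : Ordinal) : SSurreal where
  length := t.length - a
  sign j := if j < t.length - a then t.sign (a + j) else 0
  sign_mem := fun j hj => by
    rw [if_pos hj]
    exact t.sign_mem _ (Ordinal.lt_sub.1 hj)
  sign_zero := fun j hj => if_neg hj

theorem sle_drop_of {x u t : SSurreal} (h : sle (concat x u) t) :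
    sle u (drop t x.length) := by
  intro j hj
  have hlen : x.length + u.length ≤ t.length := sle_length_le h
  have hjt : j < t.length - x.length :=
    Ordinal.lt_sub.2 ((add_lt_add_right hj x.length).trans_le hlen)
  show u.sign j = (drop t x.length).sign j
  rw [drop]
  dsimp only
  rw [if_pos hjt, ← h (x.length + j) (by simpa using (add_lt_add_right hj x.length)),
    concat_sign_right]

theorem concatSum_mono (f : Ordinal.{0} → SSurreal) :
    ∀ γ, ∀ β ≤ γ, sle (concatSum β f) (concatSum γ f) := by
  intro γ
  induction γ using Ordinal.limitRecOn with
  | zero =>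
    intro β hβ
    rw [nonpos_iff_eq_zero.1 hβ]
    exact sle_refl _
  | add_one γ ih =>
    intro β hβ
    rw [concatSum_succ]
    rcases lt_or_eq_of_le hβ with h | h
    · have : β ≤ γ := by rwa [Order.lt_add_one_iff] at h
      exact sle_trans' (ih β this) (sle_concat_self _ _)
    · rw [h, ← concatSum_succ]
      exact sle_refl _
  | limit γ hγ ih =>
    have hex : ∃ s, IsSimpSup (Set.range fun p : Set.Iio γ => concatSum p.1 f) s := by
      apply exists_isSimpSup
      rintro _ ⟨⟨p, hp⟩, rfl⟩ _ ⟨⟨q, hq⟩, rfl⟩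
      rcases le_total p q with h | h
      · exact Or.inl (ih q hq p h)
      · exact Or.inr (ih p hp q h)
    intro β hβ
    rcases lt_or_eq_of_le hβ with h | h
    · rw [concatSum_limit hγ]
      exact (isSimpSup_chainSup hex).1 _ ⟨⟨β, h⟩, rfl⟩
    · rw [h]; exact sle_refl _

theorem concatSum_add (a : Ordinal.{0}) (f : Ordinal.{0} → SSurreal) :
    ∀ b, concatSum (a + b) f =
      concat (concatSum a f) (concatSum b fun i => f (a + i)) := by
  intro b
  induction b using Ordinal.limitRecOn with
  | zero => rw [add_zero, concatSum_zero, concat_zero]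
  | add_one b ih =>
    rw [← add_assoc, concatSum_succ, concatSum_succ, ih,
      concat_assoc]
  | limit b hb ih =>
    have hab : Order.IsSuccLimit (a + b) := Ordinal.isSuccLimit_add a hb
    set f' : Ordinal → SSurreal := fun i => f (a + i) with hf'
    set C' : Set SSurreal := Set.range fun p : Set.Iio b => concatSum p.1 f' with hC'
    have hexC' : ∃ s, IsSimpSup C' s := by
      apply exists_isSimpSup
      rintro _ ⟨⟨p, hp⟩, rfl⟩ _ ⟨⟨q, hq⟩, rfl⟩
      rcases le_total p q with h | h
      · exact Or.inl (concatSum_mono f' q p h)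
      · exact Or.inr (concatSum_mono f' p q h)
    have hs' : IsSimpSup C' (chainSup C') := isSimpSup_chainSup hexC'
    set A : SSurreal := concatSum a f with hA
    rw [concatSum_limit hab, concatSum_limit hb]
    apply chainSup_eq
    constructor
    · rintro _ ⟨⟨p, hp⟩, rfl⟩
      dsimp only
      rcases le_or_gt p a with h | h
      · exact sle_trans' (concatSum_mono f a p h) (sle_concat_self _ _)
      · have hpa : a + (p - a) = p := Ordinal.add_sub_cancel_of_le h.le
        have hpb : p - a < b := (Ordinal.sub_lt_of_le h.le).2 hp
        rw [← hpa, ih _ hpb]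
        exact concat_sle_concat (hs'.1 _ ⟨⟨p - a, hpb⟩, rfl⟩)
    · intro t ht
      have hAmem : sle A t := ht _ ⟨⟨a, by
        simpa using (lt_add_iff_pos_right a).2 hb.pos⟩, rfl⟩
      intro β hβ
      simp only [concat_length] at hβ
      by_cases h1 : β < A.length
      · rw [concat_sign_left _ h1]
        exact hAmem β h1
      · push_neg at h1
        rw [concat_sign_right' _ h1]
        have hub : ∀ z ∈ C', sle z (drop t A.length) := by
          rintro _ ⟨⟨i, hi⟩, rfl⟩
          apply sle_drop_of (u := concatSum i f')
          rw [← ih i hi]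
          exact ht _ ⟨⟨a + i, by simpa using hi⟩, rfl⟩
        have hfin := hs'.2 _ hub
        have hj : β - A.length < (chainSup C').length := by
          rwa [Ordinal.sub_lt_of_le h1]
        rw [hfin _ hj]
        show (if β - A.length < t.length - A.length then t.sign (A.length + (β - A.length))
          else 0) = t.sign β
        have hjl : β - A.length < t.length - A.length :=
          hj.trans_le (sle_length_le hfin)
        rw [if_pos hjl, Ordinal.add_sub_cancel_of_le h1]

end SSurreal
namespace SSurreal

@[simp] theorem countPlus_zero (s : Ordinal.{0} → ℤ) : countPlus.{0,0} s 0 = 0 :=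
  Ordinal.limitRecOn_zero _ _ _

theorem countPlus_succ (s : Ordinal.{0} → ℤ) (β : Ordinal.{0}) :
    countPlus.{0,0} s (β + 1) = if s β = 1 then countPlus.{0,0} s β + 1 else countPlus.{0,0} s β := by
  rw [countPlus, Ordinal.limitRecOn_add_one]
  rfl

theorem countPlus_limit (s : Ordinal.{0} → ℤ) {γ : Ordinal.{0}} (h : Order.IsSuccLimit γ) :
    countPlus.{0,0} s γ = ⨆ β : Set.Iio γ, countPlus.{0,0} s β.1 := by
  rw [countPlus, Ordinal.limitRecOn_limit _ _ _ _ h]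
  rfl

theorem countPlus_congr (s s' : Ordinal.{0} → ℤ) :
    ∀ γ : Ordinal.{0}, (∀ β < γ, s β = s' β) → countPlus.{0,0} s γ = countPlus.{0,0} s' γ := by
  intro γ
  induction γ using Ordinal.limitRecOn with
  | zero => intro _; simp
  | add_one γ ih =>
    intro h
    rw [countPlus_succ, countPlus_succ,
      h γ (by exact lt_add_one γ),
      ih fun β hβ => h β (hβ.trans (by exact lt_add_one γ))]
  | limit γ hγ ih =>
    intro h
    rw [countPlus_limit s hγ, countPlus_limit s' hγ]
    exact congrArg _ (funext fun β => ih β.1 β.2 fun δ hδ => h δ (hδ.trans β.2))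

theorem countPlus_mono (s : Ordinal.{0} → ℤ) :
    ∀ γ' : Ordinal.{0}, ∀ γ ≤ γ', countPlus.{0,0} s γ ≤ countPlus.{0,0} s γ' := by
  intro γ'
  induction γ' using Ordinal.limitRecOn with
  | zero => intro γ hγ; rw [nonpos_iff_eq_zero.1 hγ]
  | add_one γ' ih =>
    intro γ hγ
    rcases lt_or_eq_of_le hγ with h | h
    · rw [Order.lt_add_one_iff] at h
      refine (ih γ h).trans ?_
      rw [countPlus_succ]
      split
      · exact le_self_add
      · exact le_refl _
    · rw [h]
  | limit γ' hγ' ih =>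
    intro γ hγ
    rcases lt_or_eq_of_le hγ with h | h
    · rw [countPlus_limit s hγ']
      exact le_ciSup (Ordinal.bddAbove_of_small) (⟨γ, h⟩ : Set.Iio γ')
    · rw [h]

theorem countPlus_add (s : Ordinal.{0} → ℤ) (a : Ordinal.{0}) :
    ∀ γ : Ordinal.{0}, countPlus.{0,0} s (a + γ) = countPlus.{0,0} s a + countPlus.{0,0} (fun i => s (a + i)) γ := by
  intro γ
  induction γ using Ordinal.limitRecOn with
  | zero => simp
  | add_one γ ih =>
    rw [← add_assoc, countPlus_succ, countPlus_succ, ih]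
    split
    · rw [add_assoc]
    · rfl
  | limit γ hγ ih =>
    have hlim : Order.IsSuccLimit (a + γ) := Ordinal.isSuccLimit_add a hγ
    have hne : Nonempty (Set.Iio γ) := ⟨⟨0, hγ.pos⟩⟩
    rw [countPlus_limit _ hlim, countPlus_limit _ hγ,
      (Ordinal.isNormal_add_right (countPlus.{0,0} s a)).map_iSup Ordinal.bddAbove_of_small]
    apply le_antisymm
    · apply Ordinal.iSup_le
      rintro ⟨β, hβ⟩
      rcases le_or_gt a β with h | h
      · have h1 : β - a < γ := (Ordinal.sub_lt_of_le h).2 hβ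
        have h2 : a + (β - a) = β := Ordinal.add_sub_cancel_of_le h
        refine le_trans ?_ (le_ciSup (Ordinal.bddAbove_of_small) (⟨β - a, h1⟩ : Set.Iio γ))
        rw [← ih _ h1, h2]
      · refine le_trans (countPlus_mono s a β h.le) ?_
        refine le_trans ?_ (le_ciSup (Ordinal.bddAbove_of_small) (⟨0, hγ.pos⟩ : Set.Iio γ))
        rw [← ih 0 hγ.pos, add_zero]
    · apply Ordinal.iSup_le
      rintro ⟨β, hβ⟩
      rw [← ih β hβ]
      exact le_ciSup (Ordinal.bddAbove_of_small)
        (⟨a + β, (add_lt_add_iff_left a).2 hβ⟩ : Set.Iio (a + γ))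

theorem countPlus_allone (s : Ordinal.{0} → ℤ) :
    ∀ γ : Ordinal.{0}, (∀ β < γ, s β = 1) → countPlus.{0,0} s γ = γ := by
  intro γ
  induction γ using Ordinal.limitRecOn with
  | zero => intro _; simp
  | add_one γ ih =>
    intro h
    rw [countPlus_succ, if_pos (h γ (lt_add_one γ)),
      ih fun β hβ => h β (hβ.trans (lt_add_one γ))]
  | limit γ hγ ih =>
    intro h
    rw [countPlus_limit s hγ]
    apply le_antisymm
    · exact Ordinal.iSup_le fun ⟨β, hβ⟩ => by
        rw [ih β hβ fun δ hδ => h δ (hδ.trans hβ)]; exact hβ.le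
    · refine le_of_forall_lt fun β hβ => ?_
      have h1 : β + 1 < γ := by
        rw [Ordinal.add_one_eq_succ]
        exact hγ.succ_lt hβ
      calc β < β + 1 := lt_add_one β
        _ = countPlus.{0,0} s (β + 1) := (ih _ h1 fun δ hδ => h δ (hδ.trans h1)).symm
        _ ≤ _ := le_ciSup (Ordinal.bddAbove_of_small) (⟨β + 1, h1⟩ : Set.Iio γ)

end SSurreal
namespace SSurreal

theorem concatSum_congr (α : Ordinal.{0}) (f g : Ordinal.{0} → SSurreal) :
    (∀ β < α, f β = g β) → concatSum α f = concatSum α g := by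
  induction α using Ordinal.limitRecOn with
  | zero => intro _; rw [concatSum_zero, concatSum_zero]
  | add_one α ih =>
    intro h
    rw [concatSum_succ, concatSum_succ, h α (lt_add_one α),
      ih fun β hβ => h β (hβ.trans (lt_add_one α))]
  | limit α hα ih =>
    intro h
    rw [concatSum_limit hα, concatSum_limit hα]
    exact congrArg chainSup (congrArg Set.range (funext fun p =>
      ih p.1 p.2 fun β hβ => h β (hβ.trans p.2)))

/-- Ordinal-valued sum analogous to `concatSum`. -/
noncomputable def oSum (α : Ordinal.{0}) (g : Ordinal.{0} → Ordinal.{0}) : Ordinal.{0} :=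
  Ordinal.limitRecOn α 0 (fun β ih => ih + g β)
    (fun γ _ ih => ⨆ β : Set.Iio γ, ih β.1 β.2)

@[simp] theorem oSum_zero (g : Ordinal.{0} → Ordinal.{0}) : oSum 0 g = 0 :=
  Ordinal.limitRecOn_zero _ _ _

theorem oSum_succ (α : Ordinal.{0}) (g : Ordinal.{0} → Ordinal.{0}) :
    oSum (α + 1) g = oSum α g + g α := by
  rw [oSum, Ordinal.limitRecOn_add_one]
  rfl

theorem oSum_limit {α : Ordinal.{0}} (hα : Order.IsSuccLimit α) (g : Ordinal.{0} → Ordinal.{0}) :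
    oSum α g = ⨆ β : Set.Iio α, oSum β.1 g := by
  rw [oSum, Ordinal.limitRecOn_limit _ _ _ _ hα]
  rfl

theorem concatSum_ofOrdinal (g : Ordinal.{0} → Ordinal.{0}) :
    ∀ α, concatSum α (fun β => ofOrdinal (g β)) = ofOrdinal (oSum α g) := by
  intro α
  induction α using Ordinal.limitRecOn with
  | zero =>
    rw [concatSum_zero, oSum_zero]
    exact ext' rfl (fun β hβ => absurd hβ (by simp))
  | add_one α ih =>
    rw [concatSum_succ, ih, oSum_succ, ofOrdinal_concat]
  | limit α hα ih =>
    rw [concatSum_limit hα, oSum_limit hα]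
    apply chainSup_eq
    constructor
    · rintro _ ⟨⟨p, hp⟩, rfl⟩
      dsimp only
      rw [ih p hp]
      exact sle_ofOrdinal_ofOrdinal
        (le_ciSup (Ordinal.bddAbove_of_small) (⟨p, hp⟩ : Set.Iio α))
    · intro t ht β hβ
      simp only [ofOrdinal_length] at hβ
      obtain ⟨⟨p, hp⟩, hβp⟩ := Ordinal.lt_iSup_iff.1 hβ
      have h1 := ht _ ⟨⟨p, hp⟩, rfl⟩
      dsimp only at h1 hβp
      rw [ih p hp] at h1
      have h2 := h1 β (by simpa using hβp)
      rw [ofOrdinal_sign, if_pos hβp] at h2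
      rw [ofOrdinal_sign, if_pos hβ, h2]

theorem oSum_le_opow (c : Ordinal.{0}) :
    ∀ β, oSum β (fun i => omega0 ^ (c + (i + 1) + 1)) ≤ omega0 ^ (c + (β + 2)) := by
  intro β
  induction β using Ordinal.limitRecOn with
  | zero => simp
  | add_one β ih =>
    rw [oSum_succ]
    have h1 : c + (β + 1) + 1 = c + (β + 2) := by
      rw [add_assoc, add_assoc]
      norm_num
    have h2 : omega0 ^ (c + (β + 2)) + omega0 ^ (c + (β + 2)) ≤
        omega0 ^ (c + (β + 2) + 1) := by
      have hmul : omega0 ^ (c + (β + 2)) * 2 =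
          omega0 ^ (c + (β + 2)) + omega0 ^ (c + (β + 2)) := by
        rw [(by norm_num : (2:Ordinal) = 1 + 1), mul_add, mul_one]
      rw [← hmul, Ordinal.add_one_eq_succ, Ordinal.opow_succ]
      exact mul_le_mul_right (by exact_mod_cast (Ordinal.nat_lt_omega0 2).le) _
    have h3 : c + (β + 2) + 1 = c + (β + 1 + 2) := by
      rw [add_assoc c (β + 2) 1, add_assoc β 2 1, add_assoc β 1 2]
      norm_num
    calc oSum β _ + omega0 ^ (c + (β + 1) + 1)
        ≤ omega0 ^ (c + (β + 2)) + omega0 ^ (c + (β + 2)) := by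
          rw [h1]; exact add_le_add_left ih _
      _ ≤ omega0 ^ (c + (β + 2) + 1) := h2
      _ = omega0 ^ (c + (β + 1 + 2)) := by rw [h3]
  | limit β hβ ih =>
    rw [oSum_limit hβ]
    apply Ordinal.iSup_le
    rintro ⟨i, hi⟩
    refine (ih i hi).trans (Ordinal.opow_le_opow_right omega0_pos ?_)
    exact add_le_add_right (add_le_add_left hi.le 2) c

theorem oSum_limit_opow (c : Ordinal.{0}) {α : Ordinal.{0}} (hα : Order.IsSuccLimit α) :
    oSum α (fun i => omega0 ^ (c + (i + 1) + 1)) = omega0 ^ (c + α) := by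
  rw [oSum_limit hα]
  apply le_antisymm
  · apply Ordinal.iSup_le
    rintro ⟨β, hβ⟩
    refine (oSum_le_opow c β).trans (Ordinal.opow_le_opow_right omega0_pos ?_)
    refine add_le_add_right ?_ c
    have h1 : β + 1 < α := by rw [Ordinal.add_one_eq_succ]; exact hα.succ_lt hβ
    have h2 : β + 2 < α := by
      have : β + 2 = β + 1 + 1 := by rw [add_assoc]; norm_num
      rw [this, Ordinal.add_one_eq_succ]
      exact hα.succ_lt h1
    exact h2.le
  · rw [Ordinal.opow_le_of_isSuccLimit omega0_ne_zero (Ordinal.isSuccLimit_add c hα)]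
    intro e he
    rcases le_or_gt e c with h | h
    · have h1 : (1 : Ordinal) < α := Ordinal.one_lt_of_isSuccLimit hα
      refine le_trans ?_ (le_ciSup (Ordinal.bddAbove_of_small) (⟨1, h1⟩ : Set.Iio α))
      have : oSum 1 (fun i => omega0 ^ (c + (i + 1) + 1)) = omega0 ^ (c + (0 + 1) + 1) := by
        have h0 : (1 : Ordinal.{0}) = 0 + 1 := (zero_add 1).symm
        rw [h0, oSum_succ, oSum_zero, zero_add]
      rw [this]
      exact Ordinal.opow_le_opow_right omega0_pos
        (h.trans (by rw [zero_add]; exact (le_self_add (a := c) (b := 1)).trans le_self_add))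
    · set i := e - c with hi
      have hie : c + i = e := Ordinal.add_sub_cancel_of_le h.le
      have hiα : i < α := by
        have := he
        rw [← hie, add_lt_add_iff_left] at this
        exact this
      have hi1 : i + 1 < α := by rw [Ordinal.add_one_eq_succ]; exact hα.succ_lt hiα
      refine le_trans ?_ (le_ciSup (Ordinal.bddAbove_of_small) (⟨i + 1, hi1⟩ : Set.Iio α))
      show omega0 ^ e ≤ oSum (i + 1) _
      rw [oSum_succ]
      refine le_trans ?_ le_add_self
      refine Ordinal.opow_le_opow_right omega0_pos ?_
      rw [← hie]
      calc c + i ≤ c + (i + 1) := add_le_add_right (le_self_add) c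
        _ ≤ c + (i + 1) + 1 := le_self_add

end SSurreal
namespace SSurreal

theorem signScale_one (x : SSurreal) : signScale 1 x = x := if_pos rfl

theorem add_min (a b c : Ordinal.{0}) : a + min b c = min (a + b) (a + c) := by
  rcases le_total b c with h | h
  · rw [min_eq_left h, min_eq_left (add_le_add_right h a)]
  · rw [min_eq_right h, min_eq_right (add_le_add_right h a)]

theorem tau_trunc (z : SSurreal) (γ : Ordinal.{0}) :
    tau.{0} (trunc z γ) = countPlus.{0,0} z.sign (min γ z.length) := by
  show countPlus.{0,0} (trunc z γ).sign (min γ z.length) = _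
  refine countPlus_congr _ _ _ fun β hβ => ?_
  show (if β < min γ z.length then z.sign β else 0) = z.sign β
  rw [if_pos hβ]

theorem absorb_aux (t : Ordinal.{0}) {a : Ordinal.{0}} (ha : Order.IsSuccLimit a) :
    1 + oSum t (fun i => omega0 ^ (i + 1 + 1)) + omega0 ^ (t + a) = omega0 ^ (t + a) := by
  have hfe : (fun i : Ordinal.{0} => omega0 ^ (i + 1 + 1)) =
      (fun i : Ordinal.{0} => omega0 ^ (0 + (i + 1) + 1)) := by
    funext i; rw [zero_add]
  have hE : oSum t (fun i => omega0 ^ (i + 1 + 1)) ≤ omega0 ^ (t + 2) := by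
    rw [hfe]
    have := oSum_le_opow 0 t
    rwa [zero_add] at this
  have h2a : (2 : Ordinal) < a := by
    have := Ordinal.natCast_lt_of_isSuccLimit ha 2
    simpa using this
  have hlt : omega0 ^ (t + 2) < omega0 ^ (t + a) :=
    (Ordinal.opow_lt_opow_iff_right one_lt_omega0).2 (add_lt_add_right h2a t)
  have h1 : (1 : Ordinal) < omega0 ^ (t + 2) := by
    rw [← Ordinal.opow_zero omega0]
    exact (Ordinal.opow_lt_opow_iff_right one_lt_omega0).2
      (lt_of_lt_of_le (by norm_num) (le_add_self (a := 2) (b := t)))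
  have h1E : 1 + oSum t (fun i => omega0 ^ (i + 1 + 1)) < omega0 ^ (t + a) :=
    calc 1 + oSum t (fun i => omega0 ^ (i + 1 + 1)) ≤ 1 + omega0 ^ (t + 2) :=
          add_le_add_right hE 1
      _ = omega0 ^ (t + 2) := Ordinal.add_absorp h1 le_rfl
      _ < omega0 ^ (t + a) := hlt
  exact Ordinal.add_absorp h1E le_rfl

end SSurreal

open SSurreal in
/-- if the maximal ordinal `α` with `α ⊑ y` is a limit ordinal
(and `y > 0`), then `ω^{x ∔ y} = ω^x ∔ ω^{τ_x ∔ y}`, where `W` is the ω-map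
(given by Gonshor's sign sequence formula) and `τ_x` is the ordinal of `+1`
signs in `x`. -/
theorem omega_map_concat_formula (W : SSurreal → SSurreal)
    (hW : ∀ z, W z = gonshorRHS z) (x y : SSurreal) (hy : lt zero y)
    (hlim : ∃ α : Ordinal, Order.IsSuccLimit α ∧ sle (ofOrdinal α) y ∧
      ∀ β : Ordinal, sle (ofOrdinal β) y → β ≤ α) :
    W (concat x y) = concat (W x) (W (concat (ofOrdinal (tau x)) y)) := by
  obtain ⟨α, hαlim, hαy, -⟩ := hlim
  have hαly : α ≤ y.length := by
    have := sle_length_le hαy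
    simpa using this
  have hy1 : ∀ β < α, y.sign β = 1 := by
    intro β hβ
    have h := hαy β (by simpa using hβ)
    rw [ofOrdinal_sign, if_pos hβ] at h
    exact h.symm
  rw [hW, hW, hW]
  unfold gonshorRHS
  rw [concat_length, concat_length, ofOrdinal_length, concatSum_add, concatSum_add]
  -- abbreviations
  have hcpx : countPlus.{0,0} (concat x y).sign x.length = tau x :=
    countPlus_congr _ _ _ fun β hβ => concat_sign_left y hβ
  have hcpτ : countPlus.{0,0} (concat (ofOrdinal (tau x)) y).sign (tau x) = tau x := by
    refine countPlus_allone _ _ fun β hβ => ?_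
    rw [concat_sign_left y (show β < (ofOrdinal (tau x)).length from hβ),
      ofOrdinal_sign, if_pos hβ]
  -- the common tail terms
  have hGxy : ∀ β < y.length,
      tau (trunc (concat x y) (x.length + β + 1)) =
        tau x + countPlus y.sign (min (β + 1) y.length) := by
    intro β _
    rw [add_assoc x.length β 1, tau_trunc, concat_length, ← add_min,
      countPlus_add, hcpx]
    congr 1
    exact countPlus_congr _ _ _ fun i _ => concat_sign_right x y i
  have hGτy : ∀ β < y.length,
      tau (trunc (concat (ofOrdinal (tau x)) y) (tau x + β + 1)) =
        tau x + countPlus y.sign (min (β + 1) y.length) := by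
    intro β _
    have h1 : tau x + β + 1 = (ofOrdinal (tau x)).length + (β + 1) := by
      rw [ofOrdinal_length, add_assoc]
    rw [h1, tau_trunc, concat_length, ← add_min, countPlus_add, ofOrdinal_length, hcpτ]
    congr 1
    exact countPlus_congr _ _ _ fun i _ => concat_sign_right (ofOrdinal (tau x)) y i
  -- e1 : the x-part of the LHS
  have e1 : concatSum x.length
      (fun β => signScale ((concat x y).sign β)
        (ofOrdinal (omega0 ^ (tau (trunc (concat x y) (β + 1)) + 1)))) =
      concatSum x.length
      (fun β => signScale (x.sign β)
        (ofOrdinal (omega0 ^ (tau (trunc x (β + 1)) + 1)))) := by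
    refine concatSum_congr _ _ _ fun β hβ => ?_
    have hb1 : β + 1 ≤ x.length := by
      rw [Ordinal.add_one_eq_succ]
      exact Order.succ_le_of_lt hβ
    have htau : tau (trunc (concat x y) (β + 1)) = tau (trunc x (β + 1)) := by
      rw [tau_trunc, tau_trunc, concat_length,
        min_eq_left (hb1.trans (le_self_add)), min_eq_left hb1]
      exact countPlus_congr _ _ _ fun δ hδ => concat_sign_left y (hδ.trans_le hb1)
    rw [concat_sign_left y hβ, htau]
  -- e2 : the y-part of the LHS
  have e2 : concatSum y.length
      (fun i => signScale ((concat x y).sign (x.length + i))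
        (ofOrdinal (omega0 ^ (tau (trunc (concat x y) (x.length + i + 1)) + 1)))) =
      concatSum y.length
      (fun β => signScale (y.sign β)
        (ofOrdinal (omega0 ^ (tau x + countPlus y.sign (min (β + 1) y.length) + 1)))) := by
    refine concatSum_congr _ _ _ fun β hβ => ?_
    rw [concat_sign_right, hGxy β hβ]
  -- e3 : the τ-part of the RHS
  have e3 : concatSum (tau x)
      (fun β => signScale ((concat (ofOrdinal (tau x)) y).sign β)
        (ofOrdinal (omega0 ^ (tau (trunc (concat (ofOrdinal (tau x)) y) (β + 1)) + 1)))) =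
      ofOrdinal (oSum (tau x) (fun i => omega0 ^ (i + 1 + 1))) := by
    rw [← concatSum_ofOrdinal]
    refine concatSum_congr _ _ _ fun β hβ => ?_
    have hb1 : β + 1 ≤ tau x := by
      rw [Ordinal.add_one_eq_succ]
      exact Order.succ_le_of_lt hβ
    have hsg : (concat (ofOrdinal (tau x)) y).sign β = 1 := by
      rw [concat_sign_left y (show β < (ofOrdinal (tau x)).length from hβ),
        ofOrdinal_sign, if_pos hβ]
    have htau : tau (trunc (concat (ofOrdinal (tau x)) y) (β + 1)) = β + 1 := by
      rw [tau_trunc, concat_length, ofOrdinal_length,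
        min_eq_left (hb1.trans (le_self_add))]
      refine countPlus_allone _ _ fun i hi => ?_
      rw [concat_sign_left y (show i < (ofOrdinal (tau x)).length from hi.trans_le hb1),
        ofOrdinal_sign, if_pos (hi.trans_le hb1)]
    rw [hsg, htau, signScale_one]
  -- e4 : the y-part of the RHS
  have e4 : concatSum y.length
      (fun i => signScale ((concat (ofOrdinal (tau x)) y).sign (tau x + i))
        (ofOrdinal (omega0 ^ (tau (trunc (concat (ofOrdinal (tau x)) y) (tau x + i + 1)) + 1)))) =
      concatSum y.length
      (fun β => signScale (y.sign β)
        (ofOrdinal (omega0 ^ (tau x + countPlus y.sign (min (β + 1) y.length) + 1)))) := by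
    refine concatSum_congr _ _ _ fun β hβ => ?_
    have hsg : (concat (ofOrdinal (tau x)) y).sign (tau x + β) = y.sign β := by
      have := concat_sign_right (ofOrdinal (tau x)) y β
      rwa [ofOrdinal_length] at this
    rw [hsg, hGτy β hβ]
  -- e5 : split the common tail at α
  have eα : concatSum α
      (fun β => signScale (y.sign β)
        (ofOrdinal (omega0 ^ (tau x + countPlus y.sign (min (β + 1) y.length) + 1)))) =
      ofOrdinal (omega0 ^ (tau x + α)) := by
    have h : concatSum α
        (fun β => signScale (y.sign β)
          (ofOrdinal (omega0 ^ (tau x + countPlus y.sign (min (β + 1) y.length) + 1)))) =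
        concatSum α (fun β => ofOrdinal (omega0 ^ (tau x + (β + 1) + 1))) := by
      refine concatSum_congr _ _ _ fun β hβ => ?_
      have hb1 : β + 1 ≤ α := by
        rw [Ordinal.add_one_eq_succ]
        exact Order.succ_le_of_lt hβ
      have hcp : countPlus.{0,0} y.sign (min (β + 1) y.length) = β + 1 := by
        rw [min_eq_left (hb1.trans hαly)]
        exact countPlus_allone _ _ fun i hi => hy1 i (hi.trans_le hb1)
      rw [hy1 β hβ, hcp, signScale_one]
    rw [h, concatSum_ofOrdinal, oSum_limit_opow (tau x) hαlim]
  have e5 := concatSum_add α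
    (fun β => signScale (y.sign β)
      (ofOrdinal (omega0 ^ (tau x + countPlus y.sign (min (β + 1) y.length) + 1))))
    (y.length - α)
  rw [Ordinal.add_sub_cancel_of_le hαly, eα] at e5
  rw [e1, e2, e3, e4, e5]
  rw [← concat_assoc]
  congr 1
  rw [← concat_assoc, ← concat_assoc]
  congr 1
  rw [show (one : SSurreal) = ofOrdinal 1 from rfl, ofOrdinal_concat, ofOrdinal_concat,
    absorb_aux (tau x) hαlim]
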